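/- Let f : ℝ^d → ℝ be μ-strongly convex with L-Lipschitz gradient, with minimum f*, and suppose SGD with constant learning rate 0 < α < min{1/L, 2/μ} uses unbiased gradient estimators with component variances Var[g_i^{(k)}] = σ_i^{(k)2}/s_i^{(k)} chosen by the gCANS rule at every iteration. Then there exist constants R ≥ 0 and 0 < γ < 1 such that E[f(θ^{(k)})] − f* ≤ R γ^k for all k, i.e., E[f(θ^{(k)})] − f* = O(γ^k). -/

import Mathlib

open MeasureTheory ProbabilityTheory Real
open scoped BigOperators

section Aux

open InnerProductSpace

lemma grad_lip_cont {d : ℕ} {f : EuclideanSpace ℝ (Fin d) → ℝ} {L : ℝ} (hL : 0 < L)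
    (hlip : ∀ x y : EuclideanSpace ℝ (Fin d),
      ‖gradient f x - gradient f y‖ ≤ L * ‖x - y‖) : Continuous (gradient f) := by
  refine (LipschitzWith.of_dist_le_mul (K := L.toNNReal) fun x y => ?_).continuous
  rw [dist_eq_norm, dist_eq_norm, Real.coe_toNNReal L hL.le]
  exact hlip x y

lemma descent_lemma {d : ℕ} {f : EuclideanSpace ℝ (Fin d) → ℝ} {L : ℝ} (hL : 0 < L)
    (hdiff : Differentiable ℝ f)
    (hlip : ∀ x y : EuclideanSpace ℝ (Fin d),
      ‖gradient f x - gradient f y‖ ≤ L * ‖x - y‖)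
    (x y : EuclideanSpace ℝ (Fin d)) :
    f y ≤ f x + (inner ℝ (gradient f x) (y - x) : ℝ) + L / 2 * ‖y - x‖ ^ 2 := by
  set v := y - x with hv
  have hline : ∀ t : ℝ, HasDerivAt (fun t : ℝ => x + t • v) v t := fun t =>
    by simpa using ((hasDerivAt_id t).smul_const v).const_add x
  have hφ : ∀ t : ℝ, HasDerivAt (fun t : ℝ => f (x + t • v))
      (inner ℝ (gradient f (x + t • v)) v : ℝ) t := by
    intro t
    have hF := ((hdiff (x + t • v)).hasGradientAt).hasFDerivAt
    have := hF.comp_hasDerivAt t (hline t)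
    rw [toDual_apply_apply] at this
    exact this
  have hcont : Continuous fun t : ℝ => (inner ℝ (gradient f (x + t • v)) v : ℝ) := by
    have hc := grad_lip_cont hL hlip
    exact (hc.comp (by continuity)).inner continuous_const
  have hFTC : f y - f x = ∫ t in (0:ℝ)..1, (inner ℝ (gradient f (x + t • v)) v : ℝ) := by
    have := intervalIntegral.integral_eq_sub_of_hasDerivAt
      (f := fun t : ℝ => f (x + t • v))
      (f' := fun t : ℝ => (inner ℝ (gradient f (x + t • v)) v : ℝ))
      (fun t _ => hφ t) (hcont.intervalIntegrable 0 1)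
    simpa [hv] using this.symm
  have hbound : ∀ t ∈ Set.Icc (0:ℝ) 1,
      (inner ℝ (gradient f (x + t • v)) v : ℝ) ≤ (inner ℝ (gradient f x) v : ℝ) + L * t * ‖v‖ ^ 2 := by
    intro t ht
    have h1 : (inner ℝ (gradient f (x + t • v)) v : ℝ) - inner ℝ (gradient f x) v
        = inner ℝ (gradient f (x + t • v) - gradient f x) v := by
      rw [inner_sub_left]
    have h2 : (inner ℝ (gradient f (x + t • v) - gradient f x) v : ℝ)
        ≤ ‖gradient f (x + t • v) - gradient f x‖ * ‖v‖ := real_inner_le_norm _ _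
    have h3 : ‖gradient f (x + t • v) - gradient f x‖ ≤ L * (t * ‖v‖) := by
      have := hlip (x + t • v) x
      simpa [norm_smul, abs_of_nonneg ht.1] using this
    nlinarith [norm_nonneg v, mul_le_mul_of_nonneg_right h3 (norm_nonneg v)]
  have hint : f y - f x ≤ (inner ℝ (gradient f x) v : ℝ) + L / 2 * ‖v‖ ^ 2 := by
    rw [hFTC]
    have hmono := intervalIntegral.integral_mono_on (μ := MeasureTheory.volume)
      (a := (0:ℝ)) (b := 1) zero_le_one
      (hcont.intervalIntegrable 0 1)
      ((by fun_prop : Continuous fun t : ℝ => (inner ℝ (gradient f x) v : ℝ) + L * t * ‖v‖ ^ 2).intervalIntegrable 0 1)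
      hbound
    calc (∫ t in (0:ℝ)..1, (inner ℝ (gradient f (x + t • v)) v : ℝ))
        ≤ ∫ t in (0:ℝ)..1, ((inner ℝ (gradient f x) v : ℝ) + L * t * ‖v‖ ^ 2) := hmono
      _ = (inner ℝ (gradient f x) v : ℝ) + L / 2 * ‖v‖ ^ 2 := by
          rw [intervalIntegral.integral_add (intervalIntegrable_const)
            ((by fun_prop : Continuous fun t : ℝ => L * t * ‖v‖ ^ 2).intervalIntegrable 0 1)]
          simp only [intervalIntegral.integral_const, smul_eq_mul]
          have : (∫ t in (0:ℝ)..1, L * t * ‖v‖ ^ 2) = L / 2 * ‖v‖ ^ 2 := by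
            have : (fun t : ℝ => L * t * ‖v‖ ^ 2) = fun t : ℝ => (L * ‖v‖ ^ 2) * t := by
              ext t; ring
            rw [this, intervalIntegral.integral_const_mul, integral_id]
            ring
          rw [this]; ring
  linarith

lemma eucl_norm_sq_eq_sum {d : ℕ} (x : EuclideanSpace ℝ (Fin d)) :
    ‖x‖ ^ 2 = ∑ i, (x i) ^ 2 := by
  rw [EuclideanSpace.norm_eq, Real.sq_sqrt (by positivity)]
  simp [Real.norm_eq_abs, sq_abs]

lemma eucl_inner_eq_sum {d : ℕ} (x y : EuclideanSpace ℝ (Fin d)) :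
    (inner ℝ x y : ℝ) = ∑ i, x i * y i := by
  simp [PiLp.inner_apply, RCLike.inner_apply]
  exact Finset.sum_congr rfl fun i _ => mul_comm _ _

lemma gcans_shot_algebra {L α N S t : ℝ} (hL : L ≠ 0) (hα : α ≠ 0) (h2 : 2 - L * α ≠ 0)
    (hN : N ≠ 0) (hS : S ≠ 0) (ht : t ≠ 0) :
    t ^ 2 / (2 * L * α / (2 - L * α) * (t * S) / N)
      = (2 - L * α) / (2 * L * α) * N * t / S := by
  field_simp

lemma gcans_coef_algebra {L α E I : ℝ} (hL : L ≠ 0) (hα : α ≠ 0) :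
    E - α * I + L / 2 * (α ^ 2 * ((1 + (2 - L * α) / (2 * L * α)) * I))
      = E - α * (2 - L * α) / 4 * I := by
  field_simp
  ring

end Aux

set_option maxHeartbeats 2000000 in
/-- **Theorem 1 (gCANS geometric convergence).** Under strong convexity, Lipschitz
gradients, a constant learning rate `0 < α < min{1/L, 2/μc}`, and conditionally unbiased
gradient estimators whose component variances are `σᵢ^{(k)2}/sᵢ^{(k)}` with shots chosen
by the gCANS rule at every iteration, the SGD iterates converge geometrically:
`E[f(θ^{(k)})] − f* ≤ R γ^k` for some `R ≥ 0` and `0 < γ < 1`. -/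
theorem gcans_geometric_convergence
    (d : ℕ) (f : EuclideanSpace ℝ (Fin d) → ℝ) (μc L : ℝ) (hμc : 0 < μc) (hL : 0 < L)
    (hdiff : Differentiable ℝ f)
    (hconv : ∀ x y : EuclideanSpace ℝ (Fin d),
      f y ≥ f x + (inner ℝ (gradient f x) (y - x) : ℝ) + μc / 2 * ‖y - x‖ ^ 2)
    (hlip : ∀ x y : EuclideanSpace ℝ (Fin d),
      ‖gradient f x - gradient f y‖ ≤ L * ‖x - y‖)
    (fstar : ℝ)
    (hmin : ∃ xstar : EuclideanSpace ℝ (Fin d), f xstar = fstar ∧ ∀ x, fstar ≤ f x)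
    {Ω : Type*} {mΩ : MeasurableSpace Ω} (P : Measure Ω) [IsProbabilityMeasure P]
    (ℱ : Filtration ℕ mΩ)
    (θ : ℕ → Ω → EuclideanSpace ℝ (Fin d))
    (g : ℕ → Ω → EuclideanSpace ℝ (Fin d))
    (σ s : ℕ → Fin d → Ω → ℝ)
    (α : ℝ) (hα : 0 < α) (hαL : α < 1 / L) (hαμ : α < 2 / μc)
    (θ0 : EuclideanSpace ℝ (Fin d)) (hθ0 : ∀ ω, θ 0 ω = θ0)
    (hupdate : ∀ k ω, θ (k + 1) ω = θ k ω - α • g k ω)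
    (hadapted : ∀ k, Measurable[ℱ k] (θ k))
    (hσadapted : ∀ k i, Measurable[ℱ k] (σ k i))
    (hσnonneg : ∀ k i ω, 0 ≤ σ k i ω)
    (hσpos : ∀ k, ∀ᵐ ω ∂P, ∃ i, 0 < σ k i ω)
    (hgradne : ∀ k, ∀ᵐ ω ∂P, gradient f (θ k ω) ≠ 0)
    (hf_int : ∀ k, Integrable (fun ω => f (θ k ω)) P)
    (hg_sq_int : ∀ k, Integrable (fun ω => ‖g k ω‖ ^ 2) P)
    -- Assumption 1: conditionally unbiased estimators
    (hmean : ∀ k i,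
      P[(fun ω => g k ω i)|ℱ k] =ᵐ[P] fun ω => gradient f (θ k ω) i)
    -- Assumption 2: conditional component variances σᵢ²/sᵢ
    (hvar : ∀ k i,
      P[(fun ω => (g k ω i - gradient f (θ k ω) i) ^ 2)|ℱ k]
        =ᵐ[P] fun ω => (σ k i ω) ^ 2 / s k i ω)
    -- Assumption 6: the gCANS shot allocation rule
    (hshot : ∀ k i, ∀ᵐ ω ∂P, s k i ω =
      2 * L * α / (2 - L * α) * (σ k i ω * ∑ j, σ k j ω)
        / ‖gradient f (θ k ω)‖ ^ 2) :
    ∃ R γ : ℝ, 0 ≤ R ∧ 0 < γ ∧ γ < 1 ∧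
      ∀ k, (∫ ω, f (θ k ω) ∂P) - fstar ≤ R * γ ^ k := by
  obtain ⟨xstar, hxf, hxmin⟩ := hmin
  have hLα : L * α < 1 := by
    rw [lt_div_iff₀ hL] at hαL; linarith [hαL]
  have hLα0 : 0 < L * α := mul_pos hL hα
  -- Polyak–Łojasiewicz inequality from strong convexity
  have hPL : ∀ x : EuclideanSpace ℝ (Fin d),
      2 * μc * (f x - fstar) ≤ ‖gradient f x‖ ^ 2 := by
    intro x
    have h := hconv x xstar
    have hCS : (inner ℝ (gradient f x) (xstar - x) : ℝ)
        ≥ -(‖gradient f x‖ * ‖xstar - x‖) := by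
      have h1 := real_inner_le_norm (gradient f x) (x - xstar)
      have h2 : (inner ℝ (gradient f x) (xstar - x) : ℝ)
          = -(inner ℝ (gradient f x) (x - xstar) : ℝ) := by
        rw [← inner_neg_right]; congr 1; abel
      have h3 : ‖xstar - x‖ = ‖x - xstar‖ := norm_sub_rev _ _
      rw [h2, h3]
      linarith
    have hq : f x - fstar ≤ ‖gradient f x‖ * ‖xstar - x‖ - μc / 2 * ‖xstar - x‖ ^ 2 := by
      rw [← hxf]; linarith
    have hq2 := mul_le_mul_of_nonneg_left hq (by positivity : (0:ℝ) ≤ 2 * μc)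
    nlinarith [sq_nonneg (‖gradient f x‖ - μc * ‖xstar - x‖)]
  -- co-coercivity type upper bound on the squared gradient norm
  have hGB : ∀ x : EuclideanSpace ℝ (Fin d),
      ‖gradient f x‖ ^ 2 ≤ 2 * L * (f x - fstar) := by
    intro x
    have h := descent_lemma hL hdiff hlip x (x - L⁻¹ • gradient f x)
    have hy : x - L⁻¹ • gradient f x - x = -(L⁻¹ • gradient f x) := by abel
    rw [hy] at h
    have hin : (inner ℝ (gradient f x) (-(L⁻¹ • gradient f x)) : ℝ)
        = -(L⁻¹ * ‖gradient f x‖ ^ 2) := by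
      rw [inner_neg_right, real_inner_smul_right, real_inner_self_eq_norm_sq]
    have hn : ‖-(L⁻¹ • gradient f x)‖ ^ 2 = L⁻¹ ^ 2 * ‖gradient f x‖ ^ 2 := by
      rw [norm_neg, norm_smul, mul_pow, Real.norm_eq_abs, sq_abs]
    rw [hin, hn] at h
    have hfs := hxmin (x - L⁻¹ • gradient f x)
    have hLne : L ≠ 0 := ne_of_gt hL
    have hh : L / 2 * (L⁻¹ ^ 2 * ‖gradient f x‖ ^ 2) = L⁻¹ * ‖gradient f x‖ ^ 2 / 2  := by
      field_simp
    rw [hh] at h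
    have key : L⁻¹ * ‖gradient f x‖ ^ 2 ≤ 2 * (f x - fstar) := by linarith
    have key2 := mul_le_mul_of_nonneg_left key hL.le
    have hNN : L * (L⁻¹ * ‖gradient f x‖ ^ 2) = ‖gradient f x‖ ^ 2 := by
      field_simp
    rw [hNN] at key2
    linarith
  -- expectations are bounded below by fstar
  have hEnn : ∀ k, 0 ≤ (∫ ω, f (θ k ω) ∂P) - fstar := by
    intro k
    have : (fstar : ℝ) = ∫ _ω, fstar ∂P := by simp
    have hmono : (∫ _ω, fstar ∂P) ≤ ∫ ω, f (θ k ω) ∂P :=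
      integral_mono (integrable_const fstar) (hf_int k) fun ω => hxmin (θ k ω)
    linarith [this ▸ hmono]
  -- the contraction factor
  set γ' : ℝ := 1 - μc * α * (2 - L * α) / 2 with hγ'def
  set γ : ℝ := max γ' (1/2) with hγdef
  have hγ'lt : γ' < 1 := by
    have : 0 < μc * α * (2 - L * α) / 2 :=
      div_pos (mul_pos (mul_pos hμc hα) (by linarith)) two_pos
    simp only [hγ'def]; linarith
  have hγpos : 0 < γ := lt_of_lt_of_le (by norm_num) (le_max_right _ _)
  have hγlt : γ < 1 := max_lt hγ'lt (by norm_num)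
  -- the one-step contraction
  have hstep : ∀ k, (∫ ω, f (θ (k+1) ω) ∂P) - fstar
      ≤ γ' * ((∫ ω, f (θ k ω) ∂P) - fstar) := by
    intro k
    have hθm : Measurable (θ k) := (hadapted k).mono (ℱ.le k) le_rfl
    have hθm1 : Measurable (θ (k+1)) := (hadapted (k+1)).mono (ℱ.le (k+1)) le_rfl
    have hgeq : g k = fun ω => α⁻¹ • (θ k ω - θ (k+1) ω) := by
      funext ω
      rw [hupdate k ω]
      rw [sub_sub_cancel, smul_smul, inv_mul_cancel₀ (ne_of_gt hα), one_smul]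
    have hgm : Measurable (g k) := by
      rw [hgeq]; exact (hθm.sub hθm1).const_smul α⁻¹
    have hGc : Continuous (gradient f) := grad_lip_cont hL hlip
    have hGm : Measurable (fun ω => gradient f (θ k ω)) := hGc.measurable.comp hθm
    have hGmF : Measurable[ℱ k] (fun ω => gradient f (θ k ω)) := hGc.measurable.comp (hadapted k)
    have hGim : ∀ i, Measurable fun ω => gradient f (θ k ω) i := fun i => (EuclideanSpace.proj (𝕜 := ℝ) i).continuous.measurable.comp hGm
    have hGimF : ∀ i, Measurable[ℱ k] fun ω => gradient f (θ k ω) i := fun i =>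
      (EuclideanSpace.proj (𝕜 := ℝ) i).continuous.measurable.comp hGmF
    have hgim : ∀ i, Measurable fun ω => g k ω i := fun i => (EuclideanSpace.proj (𝕜 := ℝ) i).continuous.measurable.comp hgm
    -- integrability facts
    have hG2int : Integrable (fun ω => ‖gradient f (θ k ω)‖ ^ 2) P := by
      refine Integrable.mono' (((hf_int k).sub (integrable_const fstar)).const_mul (2 * L))
        ((hGm.norm.pow_const 2).aestronglyMeasurable) (Filter.Eventually.of_forall fun ω => ?_)
      rw [Real.norm_eq_abs, abs_of_nonneg (by positivity)]
      exact hGB (θ k ω)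
    have hGi2int : ∀ i, Integrable (fun ω => (gradient f (θ k ω) i) ^ 2) P := by
      intro i
      refine hG2int.mono' (((hGim i).pow_const 2).aestronglyMeasurable)
        (Filter.Eventually.of_forall fun ω => ?_)
      rw [Real.norm_eq_abs, abs_of_nonneg (sq_nonneg _), eucl_norm_sq_eq_sum]
      exact Finset.single_le_sum (f := fun j => (gradient f (θ k ω) j) ^ 2) (fun j _ => sq_nonneg _)
        (Finset.mem_univ i)
    have hgi2int : ∀ i, Integrable (fun ω => (g k ω i) ^ 2) P := by
      intro i
      refine (hg_sq_int k).mono' (((hgim i).pow_const 2).aestronglyMeasurable)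
        (Filter.Eventually.of_forall fun ω => ?_)
      rw [Real.norm_eq_abs, abs_of_nonneg (sq_nonneg _), eucl_norm_sq_eq_sum]
      exact Finset.single_le_sum (f := fun j => (g k ω j) ^ 2) (fun j _ => sq_nonneg _)
        (Finset.mem_univ i)
    have hGiint : ∀ i, Integrable (fun ω => gradient f (θ k ω) i) P := by
      intro i
      refine ((hGi2int i).add (integrable_const 1)).mono' ((hGim i).aestronglyMeasurable)
        (Filter.Eventually.of_forall fun ω => ?_)
      simp only [Pi.add_apply]
      rw [Real.norm_eq_abs]
      nlinarith [sq_nonneg (|gradient f (θ k ω) i| - 1), sq_abs (gradient f (θ k ω) i)]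
    have hgiint : ∀ i, Integrable (fun ω => g k ω i) P := by
      intro i
      refine ((hgi2int i).add (integrable_const 1)).mono' ((hgim i).aestronglyMeasurable)
        (Filter.Eventually.of_forall fun ω => ?_)
      simp only [Pi.add_apply]
      rw [Real.norm_eq_abs]
      nlinarith [sq_nonneg (|g k ω i| - 1), sq_abs (g k ω i)]
    have hGgint : ∀ i, Integrable (fun ω => gradient f (θ k ω) i * g k ω i) P := by
      intro i
      refine ((hGi2int i).add (hgi2int i)).mono'
        (((hGim i).mul (hgim i)).aestronglyMeasurable)
        (Filter.Eventually.of_forall fun ω => ?_)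
      simp only [Pi.add_apply]
      rw [Real.norm_eq_abs, abs_mul]
      nlinarith [sq_nonneg (|gradient f (θ k ω) i| - |g k ω i|), sq_abs (gradient f (θ k ω) i), sq_abs (g k ω i)]
    have hdiff2int : ∀ i, Integrable (fun ω => (g k ω i - gradient f (θ k ω) i) ^ 2) P := by
      intro i
      refine (((hgi2int i).const_mul 2).add ((hGi2int i).const_mul 2)).mono'
        ((((hgim i).sub (hGim i)).pow_const 2).aestronglyMeasurable)
        (Filter.Eventually.of_forall fun ω => ?_)
      simp only [Pi.add_apply]
      rw [Real.norm_eq_abs, abs_of_nonneg (sq_nonneg _)]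
      nlinarith [sq_nonneg (g k ω i + gradient f (θ k ω) i)]
    have hσsint : ∀ i, Integrable (fun ω => (σ k i ω) ^ 2 / s k i ω) P := fun i =>
      integrable_condExp.congr (hvar k i)
    -- conditional expectation computations
    have key1 : ∀ i, ∫ ω, gradient f (θ k ω) i * g k ω i ∂P = ∫ ω, (gradient f (θ k ω) i) ^ 2 ∂P := by
      intro i
      have h1 : ∫ ω, gradient f (θ k ω) i * g k ω i ∂P
          = ∫ ω, (P[(fun ω => gradient f (θ k ω) i * g k ω i)|ℱ k]) ω ∂P :=
        (integral_condExp (ℱ.le k)).symm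
      have h2 : P[(fun ω => gradient f (θ k ω) i * g k ω i)|ℱ k]
          =ᵐ[P] fun ω => gradient f (θ k ω) i * (P[(fun ω => g k ω i)|ℱ k]) ω :=
        condExp_mul_of_stronglyMeasurable_left ((hGimF i).stronglyMeasurable) (hGgint i) (hgiint i)
      have h3 : (fun ω => gradient f (θ k ω) i * (P[(fun ω => g k ω i)|ℱ k]) ω)
          =ᵐ[P] fun ω => gradient f (θ k ω) i * gradient f (θ k ω) i :=
        (hmean k i).mono fun ω hω => by dsimp only; rw [hω]
      rw [h1, integral_congr_ae (h2.trans h3)]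
      simp_rw [sq]
    have key2 : ∀ i, ∫ ω, (g k ω i - gradient f (θ k ω) i) ^ 2 ∂P
        = ∫ ω, (σ k i ω) ^ 2 / s k i ω ∂P := by
      intro i
      have h1 : ∫ ω, (g k ω i - gradient f (θ k ω) i) ^ 2 ∂P
          = ∫ ω, (P[(fun ω => (g k ω i - gradient f (θ k ω) i) ^ 2)|ℱ k]) ω ∂P :=
        (integral_condExp (ℱ.le k)).symm
      rw [h1, integral_congr_ae (hvar k i)]
    -- a.e. identity for the variance sum under the gCANS rule
    set c1 : ℝ := (2 - L * α) / (2 * L * α) with hc1def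
    have hsum_ae : ∀ᵐ ω ∂P, (∑ i, (σ k i ω) ^ 2 / s k i ω) = c1 * ‖gradient f (θ k ω)‖ ^ 2 := by
      have hall : ∀ᵐ ω ∂P, ∀ i, s k i ω
          = 2 * L * α / (2 - L * α) * (σ k i ω * ∑ j, σ k j ω) / ‖gradient f (θ k ω)‖ ^ 2 :=
        ae_all_iff.2 (hshot k)
      filter_upwards [hall, hσpos k, hgradne k] with ω hs hpos hne
      obtain ⟨i0, hi0⟩ := hpos
      have hS : 0 < ∑ j, σ k j ω :=
        Finset.sum_pos' (fun j _ => hσnonneg k j ω) ⟨i0, Finset.mem_univ i0, hi0⟩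
      have hN : (0:ℝ) < ‖gradient f (θ k ω)‖ ^ 2 :=
        pow_pos (norm_pos_iff.mpr hne) 2
      have hterm : ∀ i, (σ k i ω) ^ 2 / s k i ω
          = c1 * ‖gradient f (θ k ω)‖ ^ 2 * σ k i ω / (∑ j, σ k j ω) := by
        intro i
        rcases eq_or_lt_of_le (hσnonneg k i ω) with h0 | h0
        · rw [hs i, ← h0]; simp
        · rw [hs i, hc1def]
          exact gcans_shot_algebra (ne_of_gt hL) (ne_of_gt hα) (by linarith)
            (ne_of_gt hN) (ne_of_gt hS) (ne_of_gt h0)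
      rw [Finset.sum_congr rfl fun i _ => hterm i]
      rw [← Finset.sum_div, ← Finset.mul_sum]
      rw [mul_div_assoc, div_self (ne_of_gt hS), mul_one]
    -- integral identities
    have hinner_eq : (fun ω => (inner ℝ (gradient f (θ k ω)) (g k ω) : ℝ))
        = fun ω => ∑ i, gradient f (θ k ω) i * g k ω i := by
      funext ω; exact eucl_inner_eq_sum _ _
    have hinner_int : Integrable (fun ω => (inner ℝ (gradient f (θ k ω)) (g k ω) : ℝ)) P := by
      rw [hinner_eq]; exact integrable_finset_sum _ fun i _ => hGgint i
    have hnormG_eq : (fun ω => ‖gradient f (θ k ω)‖ ^ 2) = fun ω => ∑ i, (gradient f (θ k ω) i) ^ 2 := by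
      funext ω; exact eucl_norm_sq_eq_sum _
    have hIg : ∫ ω, (inner ℝ (gradient f (θ k ω)) (g k ω) : ℝ) ∂P = ∫ ω, ‖gradient f (θ k ω)‖ ^ 2 ∂P := by
      rw [hinner_eq, integral_finset_sum _ fun i _ => hGgint i]
      simp_rw [key1]
      rw [← integral_finset_sum _ fun i _ => hGi2int i, hnormG_eq]
    have hg2 : ∫ ω, ‖g k ω‖ ^ 2 ∂P = (1 + c1) * ∫ ω, ‖gradient f (θ k ω)‖ ^ 2 ∂P := by
      have hsplit : ∀ i, ∫ ω, (g k ω i) ^ 2 ∂P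
          = ∫ ω, (σ k i ω) ^ 2 / s k i ω ∂P + ∫ ω, (gradient f (θ k ω) i) ^ 2 ∂P := by
        intro i
        have hid : (fun ω => (g k ω i) ^ 2)
            = fun ω => (g k ω i - gradient f (θ k ω) i) ^ 2 + (2 * (gradient f (θ k ω) i * g k ω i) - (gradient f (θ k ω) i) ^ 2) := by
          funext ω; ring
        have h2int : Integrable (fun ω => 2 * (gradient f (θ k ω) i * g k ω i)
            - (gradient f (θ k ω) i) ^ 2) P := ((hGgint i).const_mul 2).sub (hGi2int i)
        rw [hid, integral_add (hdiff2int i) h2int,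
          integral_sub ((hGgint i).const_mul 2) (hGi2int i), integral_const_mul,
          key1 i, key2 i]
        ring
      have hgnorm_eq : (fun ω => ‖g k ω‖ ^ 2) = fun ω => ∑ i, (g k ω i) ^ 2 := by
        funext ω; exact eucl_norm_sq_eq_sum _
      calc ∫ ω, ‖g k ω‖ ^ 2 ∂P = ∫ ω, ∑ i, (g k ω i) ^ 2 ∂P := by rw [hgnorm_eq]
        _ = ∑ i, ∫ ω, (g k ω i) ^ 2 ∂P := integral_finset_sum _ fun i _ => hgi2int i
        _ = ∑ i, (∫ ω, (σ k i ω) ^ 2 / s k i ω ∂P + ∫ ω, (gradient f (θ k ω) i) ^ 2 ∂P) := by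
            exact Finset.sum_congr rfl fun i _ => hsplit i
        _ = (∫ ω, ∑ i, (σ k i ω) ^ 2 / s k i ω ∂P) + ∫ ω, ∑ i, (gradient f (θ k ω) i) ^ 2 ∂P := by
            rw [Finset.sum_add_distrib, ← integral_finset_sum _ fun i _ => hσsint i,
              ← integral_finset_sum _ fun i _ => hGi2int i]
        _ = c1 * (∫ ω, ‖gradient f (θ k ω)‖ ^ 2 ∂P) + ∫ ω, ‖gradient f (θ k ω)‖ ^ 2 ∂P := by
            rw [integral_congr_ae hsum_ae, integral_const_mul, hnormG_eq]
        _ = (1 + c1) * ∫ ω, ‖gradient f (θ k ω)‖ ^ 2 ∂P := by ring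
    -- pointwise descent inequality
    have hpt : ∀ ω, f (θ (k+1) ω) ≤ f (θ k ω) - α * (inner ℝ (gradient f (θ k ω)) (g k ω) : ℝ)
        + L / 2 * (α ^ 2 * ‖g k ω‖ ^ 2) := by
      intro ω
      have h := descent_lemma hL hdiff hlip (θ k ω) (θ (k+1) ω)
      have hy : θ (k+1) ω - θ k ω = -(α • g k ω) := by rw [hupdate]; abel
      rw [hy, inner_neg_right, real_inner_smul_right, norm_neg, norm_smul, mul_pow,
        Real.norm_eq_abs, sq_abs] at h
      linarith
    have hsub_int : Integrable (fun ω => f (θ k ω)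
        - α * (inner ℝ (gradient f (θ k ω)) (g k ω) : ℝ)) P :=
      (hf_int k).sub (hinner_int.const_mul α)
    have hmul_int : Integrable (fun ω => L / 2 * (α ^ 2 * ‖g k ω‖ ^ 2)) P :=
      ((hg_sq_int k).const_mul (α ^ 2)).const_mul (L / 2)
    have hrhs_int : Integrable (fun ω => f (θ k ω) - α * (inner ℝ (gradient f (θ k ω)) (g k ω) : ℝ)
        + L / 2 * (α ^ 2 * ‖g k ω‖ ^ 2)) P := hsub_int.add hmul_int
    have hint := integral_mono (hf_int (k+1)) hrhs_int hpt
    rw [integral_add hsub_int hmul_int,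
      integral_sub (hf_int k) (hinner_int.const_mul α), integral_const_mul,
      integral_const_mul, integral_const_mul, hIg, hg2] at hint
    -- integrated PL inequality
    have hIlow : 2 * μc * ((∫ ω, f (θ k ω) ∂P) - fstar) ≤ ∫ ω, ‖gradient f (θ k ω)‖ ^ 2 ∂P := by
      have hflo : Integrable (fun ω => f (θ k ω) - fstar) P :=
        (hf_int k).sub (integrable_const fstar)
      have h := integral_mono (hflo.const_mul (2 * μc)) hG2int fun ω => hPL (θ k ω)
      have hcf : ∫ _ω, fstar ∂P = fstar := by simp
      rwa [integral_const_mul, integral_sub (hf_int k) (integrable_const fstar), hcf] at h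
    -- final algebra
    set I : ℝ := ∫ ω, ‖gradient f (θ k ω)‖ ^ 2 ∂P with hIdef
    have hcoef : (∫ ω, f (θ k ω) ∂P) - α * I + L / 2 * (α ^ 2 * ((1 + c1) * I))
        = (∫ ω, f (θ k ω) ∂P) - α * (2 - L * α) / 4 * I := by
      rw [hc1def, hIdef]
      exact gcans_coef_algebra (ne_of_gt hL) (ne_of_gt hα)
    rw [hcoef] at hint
    have hc2 : 0 < α * (2 - L * α) / 4 := by
      have : (0:ℝ) < 2 - L * α := by linarith
      positivity
    have hmul := mul_le_mul_of_nonneg_left hIlow hc2.le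
    simp only [hγ'def]
    nlinarith [hmul, hint]
  refine ⟨f θ0 - fstar, γ, by linarith [hxmin θ0], hγpos, hγlt, ?_⟩
  intro k
  induction k with
  | zero =>
      have : (∫ ω, f (θ 0 ω) ∂P) = f θ0 := by
        simp only [hθ0]; simp
      rw [this]; simp
  | succ n ih =>
      have h1 := hstep n
      have h2 : γ' * ((∫ ω, f (θ n ω) ∂P) - fstar)
          ≤ γ * ((∫ ω, f (θ n ω) ∂P) - fstar) :=
        mul_le_mul_of_nonneg_right (le_max_left _ _) (hEnn n)
      have h3 : γ * ((∫ ω, f (θ n ω) ∂P) - fstar) ≤ γ * ((f θ0 - fstar) * γ ^ n) :=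
        mul_le_mul_of_nonneg_left ih hγpos.le
      calc (∫ ω, f (θ (n+1) ω) ∂P) - fstar ≤ γ * ((f θ0 - fstar) * γ ^ n) := by linarith
        _ = (f θ0 - fstar) * γ ^ (n+1) := by ring
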